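/- Let a > 0, μ ∈ ℂ, v ∈ ℝ with |μ| ≤ a/2, and let ψ*, ψ ∈ ℂ. If |v|·(|ψ*| + |ψ|)² is sufficiently small (e.g. |v|(|ψ*|+|ψ|)² ≤ a/100), then the system of equations (a-μ)φ* + v φ*² φ = a ψ*, (a-μ)φ + v φ* φ² = a ψ has a solution (φ*, φ) ∈ ℂ² with |φ* - (a/(a-μ))ψ*| ≤ C|v|(|ψ*|+|ψ|)³/a and |φ - (a/(a-μ))ψ| ≤ C|v|(|ψ*|+|ψ|)³/a for an absolute constant C. -/

import Mathlib

lemma bfe_aux (a s V W E A B : ℝ) (ha : 0 < a) (hs0 : 0 ≤ s) (hV : 0 ≤ V)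
    (hW0 : 0 ≤ W) (hE0 : 0 ≤ E) (hW : W ≤ s) (hE : E ≤ 16/9 * (V * s ^ 2))
    (hA : 3 * a / 8 ≤ A) (hB : a / 2 ≤ B) :
    a * W * E * a ≤ 10 * V * s ^ 3 * (A * B) := by
  have p1 : W * E ≤ s * (16/9 * (V * s ^ 2)) := mul_le_mul hW hE hE0 hs0
  have p2 : 3 * a / 8 * (a / 2) ≤ A * B := mul_le_mul hA hB (by linarith) (by linarith)
  nlinarith [mul_le_mul_of_nonneg_left p1 (show (0:ℝ) ≤ a * a by positivity),
    mul_le_mul_of_nonneg_left p2 (show (0:ℝ) ≤ 10 * (V * s ^ 3) by positivity),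
    show (0:ℝ) ≤ a ^ 2 * (V * s ^ 3) by positivity]

set_option maxHeartbeats 1000000 in
/-- Constant-field background field equations (Remark 1.1): for `a > 0`,
`|μ| ≤ a/2`, and `|v|(|ψ*|+|ψ|)² ≤ a/100`, the system
`(a-μ)φ* + v φ*²φ = a ψ*`, `(a-μ)φ + v φ*φ² = a ψ` has a solution close to
`((a/(a-μ))ψ*, (a/(a-μ))ψ)`, up to an error `C|v|(|ψ*|+|ψ|)³/a` for an
absolute constant `C`. -/
theorem stmt1 :
    ∃ C : ℝ, 0 < C ∧
      ∀ (a : ℝ) (μ : ℂ) (v : ℝ) (ψs ψ : ℂ), 0 < a → ‖μ‖ ≤ a / 2 →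
        |v| * (‖ψs‖ + ‖ψ‖) ^ 2 ≤ a / 100 →
        ∃ φs φ : ℂ,
          ((a : ℂ) - μ) * φs + (v : ℂ) * φs ^ 2 * φ = (a : ℂ) * ψs ∧
          ((a : ℂ) - μ) * φ + (v : ℂ) * φs * φ ^ 2 = (a : ℂ) * ψ ∧
          ‖φs - ((a : ℂ) / ((a : ℂ) - μ)) * ψs‖ ≤
            C * |v| * (‖ψs‖ + ‖ψ‖) ^ 3 / a ∧
          ‖φ - ((a : ℂ) / ((a : ℂ) - μ)) * ψ‖ ≤
            C * |v| * (‖ψs‖ + ‖ψ‖) ^ 3 / a := by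
  refine ⟨10, by norm_num, fun a μ v ψs ψ ha hμ hv => ?_⟩
  set s : ℝ := ‖ψs‖ + ‖ψ‖ with hs_def
  have hs0 : 0 ≤ s := by positivity
  have hv0 : 0 ≤ |v| := abs_nonneg v
  set α : ℂ := (a : ℂ) - μ with hα_def
  have habs_a : ‖(a : ℂ)‖ = a := by
    rw [Complex.norm_real, Real.norm_eq_abs]; exact abs_of_pos ha
  have hα_lb : a / 2 ≤ ‖α‖ := by
    have h1 : ‖(a : ℂ)‖ - ‖μ‖ ≤ ‖(a : ℂ) - μ‖ :=
      norm_sub_norm_le _ _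
    rw [habs_a] at h1
    linarith
  have hα_ub : ‖α‖ ≤ 3 * a / 2 := by
    have h1 : ‖(a : ℂ) - μ‖ ≤ ‖(a : ℂ)‖ + ‖μ‖ := by
      rw [sub_eq_add_neg]
      have := norm_add_le (a : ℂ) (-μ)
      simpa using this
    rw [habs_a] at h1
    linarith
  have hαne : α ≠ 0 := by
    intro h; rw [h] at hα_lb; simp at hα_lb; linarith
  set c : ℂ := (v : ℂ) * (a : ℂ) ^ 2 * ψs * ψ with hc_def
  have hc : ‖c‖ ≤ |v| * a ^ 2 * s ^ 2 / 4 := by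
    have h1 : ‖c‖ = |v| * a ^ 2 * (‖ψs‖ * ‖ψ‖) := by
      simp [hc_def, map_mul, map_pow, Complex.norm_real, abs_of_pos ha, mul_assoc]
    have h2 : ‖ψs‖ * ‖ψ‖ ≤ s ^ 2 / 4 := by
      nlinarith [sq_nonneg (‖ψs‖ - ‖ψ‖)]
    rw [h1]
    have h3 : 0 ≤ |v| * a ^ 2 := by positivity
    nlinarith [mul_le_mul_of_nonneg_left h2 h3]
  have hc' : ‖c‖ ≤ a ^ 3 / 400 := by
    nlinarith [sq_nonneg a, norm_nonneg c]
  set S : Set ℂ := Metric.closedBall α (a / 8) with hS_def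
  set g : ℂ → ℂ := fun z => α + c / z ^ 2 with hg_def
  have hzlb : ∀ z ∈ S, 3 * a / 8 ≤ ‖z‖ := by
    intro z hz
    rw [hS_def, Metric.mem_closedBall, Complex.dist_eq] at hz
    have h1 : ‖α‖ - ‖z - α‖ ≤ ‖z‖ := by
      have := norm_sub_norm_le α (α - z)
      simp only [sub_sub_cancel] at this
      have h2 : ‖α - z‖ = ‖z - α‖ := by
        rw [← norm_neg, neg_sub]
      linarith
    linarith
  have hzub : ∀ z ∈ S, ‖z‖ ≤ 13 * a / 8 := by
    intro z hz
    rw [hS_def, Metric.mem_closedBall, Complex.dist_eq] at hz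
    have h1 : ‖z‖ ≤ ‖z - α‖ + ‖α‖ := by
      have := norm_add_le (z - α) α
      simpa using this
    linarith
  have hmaps : Set.MapsTo g S S := by
    intro z hz
    have hA := hzlb z hz
    have hA0 : (0:ℝ) < ‖z‖ := by linarith
    rw [hS_def, Metric.mem_closedBall, Complex.dist_eq]
    have h1 : g z - α = c / z ^ 2 := by simp [hg_def]
    rw [h1, norm_div, norm_pow]
    rw [div_le_iff₀ (by positivity)]
    nlinarith [pow_le_pow_left₀ (show (0:ℝ) ≤ 3 * a / 8 by positivity) hA 2]
  have hlip : LipschitzOnWith (1/2 : NNReal) g S := by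
    apply LipschitzOnWith.of_dist_le_mul
    intro x hx y hy
    have hAx := hzlb x hx
    have hAy := hzlb y hy
    have hBx := hzub x hx
    have hBy := hzub y hy
    have hx1 : (0:ℝ) < ‖x‖ := by linarith
    have hy1 : (0:ℝ) < ‖y‖ := by linarith
    have hx0 : x ≠ 0 := by
      intro h; rw [h] at hx1; simp at hx1
    have hy0 : y ≠ 0 := by
      intro h; rw [h] at hy1; simp at hy1
    have h1 : (g x - g y) * (x ^ 2 * y ^ 2) = c * ((y - x) * (y + x)) := by
      simp only [hg_def]
      field_simp
      ring
    have h2 := congrArg (‖·‖) h1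
    simp only [norm_mul, norm_pow] at h2
    have hD : ‖y - x‖ = ‖x - y‖ := by
      rw [← norm_neg, neg_sub]
    rw [hD] at h2
    rw [Complex.dist_eq, Complex.dist_eq]
    have hq : (0:ℝ) < ‖x‖ ^ 2 * ‖y‖ ^ 2 := by positivity
    rw [show ((1/2 : NNReal) : ℝ) = 1/2 by norm_num]
    rw [← mul_le_mul_iff_of_pos_right hq, h2]
    have hxy : ‖y + x‖ ≤ 13 * a / 4 := by
      have := norm_add_le y x
      linarith
    have hcE : ‖c‖ * ‖y + x‖ ≤
        1/2 * (‖x‖ ^ 2 * ‖y‖ ^ 2) := by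
      have m1 : ‖c‖ * ‖y + x‖ ≤ (a ^ 3 / 400) * (13 * a / 4) :=
        mul_le_mul hc' hxy (norm_nonneg _) (by positivity)
      have m2 : (3 * a / 8) ^ 2 * ((3 * a / 8) ^ 2) ≤
          ‖x‖ ^ 2 * ‖y‖ ^ 2 :=
        mul_le_mul (pow_le_pow_left₀ (by positivity) hAx 2)
          (pow_le_pow_left₀ (by positivity) hAy 2) (by positivity) (by positivity)
      nlinarith [m1, m2]
    linarith [mul_le_mul_of_nonneg_right hcE (norm_nonneg (x - y))]
  have hSclosed : IsClosed S := Metric.isClosed_closedBall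
  haveI : CompleteSpace S := hSclosed.completeSpace_coe
  haveI : Nonempty S := ⟨⟨α, Metric.mem_closedBall_self (by linarith)⟩⟩
  have hcontr : ContractingWith (1/2 : NNReal) (hmaps.restrict g S S) :=
    ⟨by exact_mod_cast (by norm_num : (1/2:ℝ) < 1), hlip.mapsToRestrict hmaps⟩
  obtain ⟨z₀, hz₀⟩ : ∃ z₀ : S, hmaps.restrict g S S z₀ = z₀ :=
    ⟨hcontr.fixedPoint _, hcontr.fixedPoint_isFixedPt⟩
  set z : ℂ := (z₀ : ℂ) with hz_def
  have hzS : z ∈ S := z₀.2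
  have hgz : α + c / z ^ 2 = z := congrArg Subtype.val hz₀
  have hA := hzlb z hzS
  have hA0 : (0:ℝ) < ‖z‖ := by linarith
  have hzne : z ≠ 0 := by
    intro h; rw [h] at hA0; simp at hA0
  have hzmα : z - α = c / z ^ 2 := by
    linear_combination (-1 : ℂ) * hgz
  have hEabs : ‖α - z‖ ≤ 16/9 * (|v| * s ^ 2) := by
    have h1 : ‖α - z‖ = ‖c‖ / ‖z‖ ^ 2 := by
      rw [← norm_neg, neg_sub, hzmα, norm_div, norm_pow]
    rw [h1, div_le_iff₀ (by positivity)]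
    nlinarith [pow_le_pow_left₀ (show (0:ℝ) ≤ 3 * a / 8 by positivity) hA 2,
      mul_le_mul_of_nonneg_left
        (pow_le_pow_left₀ (show (0:ℝ) ≤ 3 * a / 8 by positivity) hA 2)
        (show (0:ℝ) ≤ 16/9 * (|v| * s ^ 2) by positivity)]
  have hψs_le : ‖ψs‖ ≤ s := by
    rw [hs_def]; linarith [norm_nonneg ψ]
  have hψ_le : ‖ψ‖ ≤ s := by
    rw [hs_def]; linarith [norm_nonneg ψs]
  have bound : ∀ w : ℂ, ‖w‖ ≤ s →
      ‖(a : ℂ) * w / z - ((a : ℂ) / α) * w‖ ≤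
        10 * |v| * s ^ 3 / a := by
    intro w hw
    have h1 : (a : ℂ) * w / z - ((a : ℂ) / α) * w = (a : ℂ) * w * (α - z) / (z * α) := by
      field_simp
    have hαpos : (0:ℝ) < ‖α‖ := by linarith
    rw [h1, norm_div, norm_mul, norm_mul, habs_a, norm_mul]
    rw [div_le_div_iff₀ (mul_pos hA0 hαpos) ha]
    exact bfe_aux a s |v| (‖w‖) (‖α - z‖) (‖z‖)
      (‖α‖) ha hs0 hv0 (norm_nonneg _) (norm_nonneg _)
      hw hEabs hA hα_lb
  refine ⟨(a : ℂ) * ψs / z, (a : ℂ) * ψ / z, ?_, ?_, bound ψs hψs_le, bound ψ hψ_le⟩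
  · have key : α * ((a:ℂ) * ψs / z) + (v:ℂ) * ((a:ℂ) * ψs / z) ^ 2 * ((a:ℂ) * ψ / z) =
        ((a:ℂ) * ψs / z) * (α + c / z ^ 2) := by
      rw [hc_def]
      field_simp
    rw [key, hgz]
    field_simp
  · have key : α * ((a:ℂ) * ψ / z) + (v:ℂ) * ((a:ℂ) * ψs / z) * ((a:ℂ) * ψ / z) ^ 2 =
        ((a:ℂ) * ψ / z) * (α + c / z ^ 2) := by
      rw [hc_def]
      field_simp
    rw [key, hgz]
    field_simp
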